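/- If f^{2^{i-1}} has a periodic point of least period 2j for some integers i ≥ 2 and j ≥ 1, then f has a periodic point of least period 2^i · j. -/

import Mathlib

/-- `x` has least period `m` under `f`. -/
def IsLeastPeriod (f : ℝ → ℝ) (x : ℝ) (m : ℕ) : Prop :=
  0 < m ∧ f^[m] x = x ∧ ∀ k, 0 < k → k < m → f^[k] x ≠ x

/-- If `f^[2^(i-1)]` has a periodic point of least period `2j` for some `i ≥ 2`
and `j ≥ 1`, then `f` has a periodic point of least period `2^i * j`. -/
theorem period_doubling {a b : ℝ} (hab : a ≤ b) (f : ℝ → ℝ)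
    (hf : ContinuousOn f (Set.Icc a b)) (hmaps : Set.MapsTo f (Set.Icc a b) (Set.Icc a b))
    (i j : ℕ) (hi : 2 ≤ i) (hj : 1 ≤ j)
    (h : ∃ x ∈ Set.Icc a b, IsLeastPeriod (f^[2 ^ (i - 1)]) x (2 * j)) :
    ∃ y ∈ Set.Icc a b, IsLeastPeriod f y (2 ^ i * j) := by
  obtain ⟨x, hx, hm, hfix, hmin⟩ := h
  set N : ℕ := 2 ^ (i - 1) with hN
  set p : ℕ := Function.minimalPeriod f x with hp
  -- x is a periodic point of f
  have hper : Function.IsPeriodicPt f (N * (2 * j)) x := by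
    have : (f^[N])^[2 * j] x = x := hfix
    rwa [← Function.iterate_mul] at this
  have hNmpos : 0 < N * (2 * j) := Nat.mul_pos (Nat.pow_pos (by norm_num)) hm
  have hppos : 0 < p := Function.IsPeriodicPt.minimalPeriod_pos hNmpos hper
  -- the minimal period of x under f^[N] is 2*j
  have hminper : Function.minimalPeriod (f^[N]) x = 2 * j := by
    have hperN : Function.IsPeriodicPt (f^[N]) (2 * j) x := hfix
    refine le_antisymm (hperN.minimalPeriod_le hm) ?_
    by_contra hlt
    push_neg at hlt
    have hpos : 0 < Function.minimalPeriod (f^[N]) x := by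
      exact Function.IsPeriodicPt.minimalPeriod_pos hm hperN
    exact hmin _ hpos hlt (Function.iterate_minimalPeriod)
  have hNne : N ≠ 0 := by positivity
  have hdiv : p / Nat.gcd p N = 2 * j := by
    rw [← hminper, Function.minimalPeriod_iterate_eq_div_gcd hNne]
  set d : ℕ := Nat.gcd p N with hd
  have hdp : d ∣ p := Nat.gcd_dvd_left _ _
  have hdN : d ∣ N := Nat.gcd_dvd_right _ _
  have hpeq : p = 2 * j * d := by
    have := Nat.div_mul_cancel hdp
    rw [hdiv] at this
    exact this.symm
  obtain ⟨s, hs, hds⟩ := (Nat.dvd_prime_pow Nat.prime_two).mp hdN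
  -- show s = i - 1
  have hse : s = i - 1 := by
    by_contra hne
    have hslt : s + 1 ≤ i - 1 := by omega
    have h1 : 2 ^ (s + 1) ∣ p := by
      rw [hpeq, hds]
      have : 2 ^ (s + 1) ∣ 2 * 2 ^ s := by rw [pow_succ, Nat.mul_comm]
      calc 2 ^ (s + 1) ∣ 2 * 2 ^ s := this
        _ ∣ 2 * j * 2 ^ s := by
            apply Nat.mul_dvd_mul_right
            exact Dvd.intro j rfl
    have h2 : 2 ^ (s + 1) ∣ N := pow_dvd_pow 2 hslt
    have h3 : 2 ^ (s + 1) ∣ d := Nat.dvd_gcd h1 h2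
    rw [hds] at h3
    have := Nat.le_of_dvd (Nat.pow_pos (by norm_num)) h3
    have := Nat.pow_lt_pow_right (a := 2) (by norm_num) (Nat.lt_succ_self s)
    omega
  have hfinal : p = 2 ^ i * j := by
    rw [hpeq, hds, hse]
    have : 2 ^ i = 2 * 2 ^ (i - 1) := by
      rw [← pow_succ']
      congr 1
      omega
    rw [this]; ring
  refine ⟨x, hx, ?_, ?_, ?_⟩
  · rw [← hfinal]; exact hppos
  · rw [← hfinal]; exact Function.iterate_minimalPeriod
  · intro k hk hk' hfx
    rw [← hfinal] at hk'
    exact absurd (Function.IsPeriodicPt.minimalPeriod_le hk hfx) (by omega)
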